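/- Let (M,d) be a metric space in which every pair of points x,y is joined by a constant-speed geodesic, i.e. a map γ : [0,1] → M with γ(0) = x, γ(1) = y, and d(γ(s),γ(t)) = |s−t|·d(x,y) for all s,t ∈ [0,1]. Let α ∈ (0,1], let ε, M_n > 0, and let a ∈ (0,1] be such that 1/a is a positive integer and M_n · a^α ≤ ε/3. Let S ⊆ M be a finite set such that every point of M is within distance ε/3 of some point of S, and let K be a positive integer such that for every x ∈ S, card{y ∈ S : d(x,y) ≤ ε} ≤ K. Then there exists a finite set F of functions from [0,1] to M with card F ≤ (card S) · K^{1/a} such that for every f : [0,1] → M satisfying d(f(t₁),f(t₂)) ≤ M_n·|t₁−t₂|^α for all t₁,t₂ ∈ [0,1], there exists f̂ ∈ F with sup_{t∈[0,1]} d(f(t),f̂(t)) ≤ 5ε/3. Moreover, each f̂ ∈ F takes values in S at the grid points ka (k = 0,1,…,1/a), is a constant-speed geodesic on each interval [ka,(k+1)a], and satisfies d(f̂(ka),f̂((k+1)a)) ≤ ε for each k. -/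

import Mathlib

open Set
open Finset

open Classical in
noncomputable def chainSet {M : Type*} [MetricSpace M] (S : Finset M) (ε : ℝ) (m : ℕ) :
    Finset (Fin (m+1) → M) :=
  (Fintype.piFinset fun _ => S).filter
    (fun w => ∀ i : Fin m, dist (w i.castSucc) (w i.succ) ≤ ε)

lemma chainSet_card_le {M : Type*} [MetricSpace M] (S : Finset M) (ε : ℝ) (K : ℕ)
    (hKnb : ∀ x ∈ S, (S.filter fun y => dist x y ≤ ε).card ≤ K) :
    ∀ m : ℕ, (chainSet S ε m).card ≤ S.card * K ^ m := by
  classical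
  intro m
  induction m with
  | zero =>
      calc (chainSet S ε 0).card ≤ (Fintype.piFinset fun _ : Fin 1 => S).card :=
            Finset.card_filter_le _ _
        _ = S.card * K ^ 0 := by simp [Fintype.card_piFinset]
  | succ m ih =>
      have hmem : ∀ w ∈ chainSet S ε (m+1), ∀ i, w i ∈ S := by
        intro w hw i
        have := (Finset.mem_filter.1 hw).1
        exact (Fintype.mem_piFinset.1 this) i
      set f : (Fin (m+2) → M) → (Fin (m+1) → M) := fun w => w ∘ Fin.castSucc with hf
      have hKbound : ∀ u ∈ (chainSet S ε (m+1)).image f,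
          ((chainSet S ε (m+1)).filter fun w => f w = u).card ≤ K := by
        intro u hu
        obtain ⟨w₀, hw₀, hw₀u⟩ := Finset.mem_image.1 hu
        have hulast : u (Fin.last m) ∈ S := by
          rw [← hw₀u]; exact hmem w₀ hw₀ _
        have hinj : Set.InjOn (fun w : Fin (m+2) → M => w (Fin.last (m+1)))
            ↑((chainSet S ε (m+1)).filter fun w => f w = u) := by
          intro w₁ h₁ w₂ h₂ hl
          have e₁ := (Finset.mem_filter.1 h₁).2
          have e₂ := (Finset.mem_filter.1 h₂).2
          funext i
          rcases Fin.eq_castSucc_or_eq_last i with ⟨j, rfl⟩ | rfl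
          · have := congrFun (e₁.trans e₂.symm) j
            simpa [hf] using this
          · exact hl
        have hmaps : ∀ w ∈ (chainSet S ε (m+1)).filter fun w => f w = u,
            w (Fin.last (m+1)) ∈ S.filter fun y => dist (u (Fin.last m)) y ≤ ε := by
          intro w hw
          obtain ⟨hw1, hw2⟩ := Finset.mem_filter.1 hw
          refine Finset.mem_filter.2 ⟨hmem w hw1 _, ?_⟩
          have := (Finset.mem_filter.1 hw1).2 (Fin.last m)
          have hcast : w ((Fin.last m).castSucc) = u (Fin.last m) := by
            rw [← hw2]; rfl
          rw [hcast] at this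
          simpa using this
        calc ((chainSet S ε (m+1)).filter fun w => f w = u).card
            ≤ (S.filter fun y => dist (u (Fin.last m)) y ≤ ε).card :=
              Finset.card_le_card_of_injOn _ hmaps hinj
          _ ≤ K := hKnb _ hulast
      have himg : (chainSet S ε (m+1)).image f ⊆ chainSet S ε m := by
        intro u hu
        obtain ⟨w, hw, rfl⟩ := Finset.mem_image.1 hu
        obtain ⟨hw1, hw2⟩ := Finset.mem_filter.1 hw
        refine Finset.mem_filter.2 ⟨Fintype.mem_piFinset.2 fun i => hmem w hw _, fun i => ?_⟩
        have := hw2 i.castSucc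
        simpa [hf, ← Fin.succ_castSucc] using this
      calc (chainSet S ε (m+1)).card ≤ K * ((chainSet S ε (m+1)).image f).card :=
            Finset.card_le_mul_card_image (f := f) _ K hKbound
        _ ≤ K * (chainSet S ε m).card := by
            gcongr
        _ ≤ K * (S.card * K ^ m) := by gcongr
        _ = S.card * K ^ (m+1) := by ring


/-- Covering of the α-Hölder ball by piecewise geodesic functions with vertices in a
net `S`: there are at most `card S · K^{1/a}` piecewise geodesics approximating every
`(M_n, α)`-Hölder function within `5ε/3` in the supremum distance. -/
theorem stmt_8
    {M : Type*} [MetricSpace M]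
    (hgeo : ∀ x y : M, ∃ γ : ℝ → M, γ 0 = x ∧ γ 1 = y ∧
      ∀ s ∈ Icc (0 : ℝ) 1, ∀ t ∈ Icc (0 : ℝ) 1,
        dist (γ s) (γ t) = |s - t| * dist x y)
    (α : ℝ) (hα0 : 0 < α) (hα1 : α ≤ 1)
    (ε M_n : ℝ) (hε : 0 < ε) (hM : 0 < M_n)
    (n : ℕ) (hn : 0 < n) (a : ℝ) (ha : a = 1 / (n : ℝ))
    (haM : M_n * a ^ α ≤ ε / 3)
    (S : Finset M) (hS : ∀ x : M, ∃ s ∈ S, dist x s ≤ ε / 3)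
    (K : ℕ) (hK : 0 < K)
    (hKnb : ∀ x ∈ S, ({y : M | y ∈ S ∧ dist x y ≤ ε}).ncard ≤ K) :
    ∃ F : Set (ℝ → M), F.Finite ∧ F.ncard ≤ S.card * K ^ n ∧
      (∀ g ∈ F,
        (∀ k : ℕ, k ≤ n → g ((k : ℝ) * a) ∈ S) ∧
        (∀ k : ℕ, k < n →
          ∀ s ∈ Icc ((k : ℝ) * a) (((k : ℝ) + 1) * a),
          ∀ t ∈ Icc ((k : ℝ) * a) (((k : ℝ) + 1) * a),
            dist (g s) (g t)
              = (|s - t| / a) * dist (g ((k : ℝ) * a)) (g (((k : ℝ) + 1) * a))) ∧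
        (∀ k : ℕ, k < n →
          dist (g ((k : ℝ) * a)) (g (((k : ℝ) + 1) * a)) ≤ ε)) ∧
      ∀ f : ℝ → M,
        (∀ t₁ ∈ Icc (0 : ℝ) 1, ∀ t₂ ∈ Icc (0 : ℝ) 1,
          dist (f t₁) (f t₂) ≤ M_n * |t₁ - t₂| ^ α) →
        ∃ g ∈ F, ∀ t ∈ Icc (0 : ℝ) 1, dist (f t) (g t) ≤ 5 * ε / 3 := by
  classical
  choose G hG0 hG1 hGd using hgeo
  have hn' : (0:ℝ) < n := by exact_mod_cast hn
  have ha0 : 0 < a := by rw [ha]; positivity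
  have hna : (n:ℝ) * a = 1 := by rw [ha]; field_simp
  set ext : (Fin (n+1) → M) → ℕ → M := fun w k => w ⟨min k n, by omega⟩ with hext
  have hextle : ∀ w : Fin (n+1) → M, ∀ k : ℕ, k ≤ n → ∀ h : k < n + 1,
      ext w k = w ⟨k, h⟩ := by
    intro w k hk h
    simp only [hext]
    congr 1
    exact Fin.ext (by simp; omega)
  set gfun : (Fin (n+1) → M) → ℝ → M := fun w t =>
    G (ext w (min (⌊t/a⌋₊) (n-1))) (ext w (min (⌊t/a⌋₊) (n-1) + 1))
      ((t - ((min (⌊t/a⌋₊) (n-1) : ℕ) : ℝ) * a)/a) with hgfun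
  -- key evaluation lemma
  have hval : ∀ w : Fin (n+1) → M, ∀ k : ℕ, k < n → ∀ s : ℝ,
      (k:ℝ)*a ≤ s → s ≤ ((k:ℝ)+1)*a →
      gfun w s = G (ext w k) (ext w (k+1)) ((s - (k:ℝ)*a)/a) := by
    intro w k hk s hs1 hs2
    have hs0 : 0 ≤ s := le_trans (by positivity) hs1
    rcases lt_or_eq_of_le hs2 with h | h
    · have hfloor : ⌊s/a⌋₊ = k := by
        rw [Nat.floor_eq_iff (by positivity)]
        constructor
        · rw [le_div_iff₀ ha0]; exact hs1
        · rw [div_lt_iff₀ ha0]; push_cast; linarith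
      have hmin : min (⌊s/a⌋₊) (n-1) = k := by rw [hfloor]; omega
      simp only [hgfun, hmin]
    · by_cases hk1 : k + 1 < n
      · have hfloor : ⌊s/a⌋₊ = k+1 := by
          have : s / a = ((k+1 : ℕ) : ℝ) := by
            rw [h]; push_cast; field_simp
          rw [this, Nat.floor_natCast]
        have hmin : min (⌊s/a⌋₊) (n-1) = k+1 := by rw [hfloor]; omega
        simp only [hgfun, hmin]
        have e1 : (s - (((k+1:ℕ)):ℝ) * a)/a = 0 := by
          rw [h]; push_cast; field_simp; ring
        have e2 : (s - (k:ℝ)*a)/a = 1 := by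
          rw [h]; field_simp; ring
        rw [e1, e2, hG0, hG1]
      · have hkn : k + 1 = n := by omega
        have hfloor : ⌊s/a⌋₊ = n := by
          have : s / a = ((n : ℕ) : ℝ) := by
            rw [h, ← hkn]; push_cast; field_simp
          rw [this, Nat.floor_natCast]
        have hmin : min (⌊s/a⌋₊) (n-1) = k := by rw [hfloor]; omega
        simp only [hgfun, hmin]
  -- grid values
  have hgrid : ∀ w : Fin (n+1) → M, ∀ k : ℕ, k ≤ n → gfun w ((k:ℝ)*a) = ext w k := by
    intro w k hk
    rcases lt_or_eq_of_le hk with h | h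
    · rw [hval w k h ((k:ℝ)*a) le_rfl (by nlinarith)]
      have : ((k:ℝ)*a - (k:ℝ)*a)/a = 0 := by field_simp; ring
      rw [this, hG0]
    · rw [h]
      have hn1 : (n:ℕ) - 1 < n := by omega
      have hc : (((n-1:ℕ)):ℝ) = (n:ℝ) - 1 := by
        push_cast [Nat.cast_sub hn]; ring
      rw [hval w (n-1) hn1 ((n:ℝ)*a) (by rw [hc]; nlinarith) (by rw [hc]; nlinarith)]
      have : ((n:ℝ)*a - (((n-1:ℕ)):ℝ)*a)/a = 1 := by
        rw [hc]; field_simp; ring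
      rw [this, hG1]
      congr 1
      omega
  -- geodesic distance on each interval
  have hdist : ∀ w : Fin (n+1) → M, ∀ k : ℕ, k < n →
      ∀ s ∈ Icc ((k:ℝ)*a) (((k:ℝ)+1)*a), ∀ t ∈ Icc ((k:ℝ)*a) (((k:ℝ)+1)*a),
      dist (gfun w s) (gfun w t) = (|s - t|/a) * dist (ext w k) (ext w (k+1)) := by
    intro w k hk s hs t ht
    rw [hval w k hk s hs.1 hs.2, hval w k hk t ht.1 ht.2]
    have hmem : ∀ u : ℝ, (k:ℝ)*a ≤ u → u ≤ ((k:ℝ)+1)*a → (u - (k:ℝ)*a)/a ∈ Icc (0:ℝ) 1 := by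
      intro u h1 h2
      constructor
      · exact div_nonneg (by linarith) ha0.le
      · rw [div_le_one ha0]; linarith
    rw [hGd _ _ _ (hmem s hs.1 hs.2) _ (hmem t ht.1 ht.2)]
    congr 1
    have e : (s - (k:ℝ)*a)/a - (t - (k:ℝ)*a)/a = (s-t)/a := by ring
    rw [e, abs_div, abs_of_pos ha0]
  -- chain edge distances
  have hchain : ∀ w ∈ chainSet S ε n, ∀ k : ℕ, k < n →
      dist (ext w k) (ext w (k+1)) ≤ ε := by
    intro w hw k hk
    have h2 := (Finset.mem_filter.1 hw).2 ⟨k, hk⟩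
    rw [hextle w k hk.le (by omega), hextle w (k+1) hk (by omega)]
    convert h2 using 3 <;> exact Fin.ext (by simp)
  have hwS : ∀ w ∈ chainSet S ε n, ∀ k : ℕ, k ≤ n → ext w k ∈ S := by
    intro w hw k hk
    have h1 := Fintype.mem_piFinset.1 (Finset.mem_filter.1 hw).1
    rw [hextle w k hk (by omega)]
    exact h1 _
  have hmem01 : ∀ k : ℕ, k ≤ n → (k:ℝ)*a ∈ Icc (0:ℝ) 1 := by
    intro k hk
    constructor
    · positivity
    · rw [← hna]
      have : (k:ℝ) ≤ n := by exact_mod_cast hk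
      nlinarith
  have hKnb' : ∀ x ∈ S, (S.filter fun y => dist x y ≤ ε).card ≤ K := by
    intro x hx
    have h := hKnb x hx
    have he : ({y : M | y ∈ S ∧ dist x y ≤ ε}) = ↑(S.filter fun y => dist x y ≤ ε) := by
      ext y; simp
    rwa [he, Set.ncard_coe_finset] at h
  refine ⟨↑((chainSet S ε n).image gfun), Finset.finite_toSet _, ?_, ?_, ?_⟩
  · rw [Set.ncard_coe_finset]
    calc ((chainSet S ε n).image gfun).card ≤ (chainSet S ε n).card :=
          Finset.card_image_le
      _ ≤ S.card * K ^ n := chainSet_card_le S ε K hKnb' n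
  · intro g hg
    obtain ⟨w, hw, rfl⟩ := Finset.mem_image.1 (by exact_mod_cast hg)
    refine ⟨fun k hk => ?_, fun k hk s hs t ht => ?_, fun k hk => ?_⟩
    · rw [hgrid w k hk]; exact hwS w hw k hk
    · have e1 : gfun w ((k:ℝ)*a) = ext w k := hgrid w k hk.le
      have e2 : gfun w (((k:ℝ)+1)*a) = ext w (k+1) := by
        have : ((k:ℝ)+1) = ((k+1:ℕ):ℝ) := by push_cast; ring
        rw [this, hgrid w (k+1) hk]
      rw [e1, e2]
      exact hdist w k hk s hs t ht
    · have e1 : gfun w ((k:ℝ)*a) = ext w k := hgrid w k hk.le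
      have e2 : gfun w (((k:ℝ)+1)*a) = ext w (k+1) := by
        have : ((k:ℝ)+1) = ((k+1:ℕ):ℝ) := by push_cast; ring
        rw [this, hgrid w (k+1) hk]
      rw [e1, e2]
      exact hchain w hw k hk
  · intro f hf
    choose nf hnfS hnfd using hS
    set w : Fin (n+1) → M := fun i => nf (f (((i:ℕ):ℝ) * a)) with hwdef
    have hwchain : w ∈ chainSet S ε n := by
      refine Finset.mem_filter.2 ⟨Fintype.mem_piFinset.2 fun i => hnfS _, fun i => ?_⟩
      have hc1 : ((i.castSucc : ℕ) : ℝ) = (i:ℕ) := by simp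
      have hc2 : ((i.succ : ℕ) : ℝ) = (i:ℕ) + 1 := by simp
      simp only [hwdef, hc1, hc2]
      have hd : dist (f (((i:ℕ):ℝ)*a)) (f ((((i:ℕ):ℝ)+1)*a)) ≤ M_n * a ^ α := by
        have h1 := hf (((i:ℕ):ℝ)*a) (hmem01 i (by omega)) ((((i:ℕ):ℝ)+1)*a)
          (by have : (((i:ℕ):ℝ)+1) = ((i+1:ℕ):ℝ) := by push_cast; ring
              rw [this]; exact hmem01 (i+1) (by omega))
        have habs : |((i:ℕ):ℝ)*a - (((i:ℕ):ℝ)+1)*a| = a := by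
          rw [abs_of_nonpos (by nlinarith)]; ring
        rwa [habs] at h1
      calc dist (nf (f (((i:ℕ):ℝ)*a))) (nf (f ((((i:ℕ):ℝ)+1)*a)))
          ≤ dist (nf (f (((i:ℕ):ℝ)*a))) (f (((i:ℕ):ℝ)*a))
            + dist (f (((i:ℕ):ℝ)*a)) (f ((((i:ℕ):ℝ)+1)*a))
            + dist (f ((((i:ℕ):ℝ)+1)*a)) (nf (f ((((i:ℕ):ℝ)+1)*a))) := by
              exact dist_triangle4 _ _ _ _
        _ ≤ ε/3 + (M_n * a ^ α) + ε/3 := by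
              gcongr
              · rw [dist_comm]; exact hnfd _
              · exact hnfd _
        _ ≤ ε := by linarith
    refine ⟨gfun w, by exact_mod_cast Finset.mem_image_of_mem gfun hwchain, ?_⟩
    intro t ht
    set k := min (⌊t/a⌋₊) (n-1) with hkdef
    have hk : k < n := by omega
    have ht0 : 0 ≤ t := ht.1
    have ht1 : (k:ℝ)*a ≤ t := by
      have h1 : (k:ℝ) ≤ ⌊t/a⌋₊ := by exact_mod_cast min_le_left _ _
      have h2 : (⌊t/a⌋₊ : ℝ) ≤ t/a := Nat.floor_le (by positivity)
      rw [← le_div_iff₀ ha0]; linarith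
    have ht2 : t ≤ ((k:ℝ)+1)*a := by
      by_cases hc : ⌊t/a⌋₊ ≤ n - 1
      · have hkf : k = ⌊t/a⌋₊ := by omega
        have := Nat.lt_floor_add_one (t/a)
        rw [div_lt_iff₀ ha0] at this
        rw [hkf]
        push_cast at this ⊢
        linarith
      · have hkf : k = n - 1 := by omega
        have : ((k:ℝ)+1) = (n:ℝ) := by
          rw [hkf]; push_cast [Nat.cast_sub hn]; ring
        rw [this, hna]; exact ht.2
    have hterm1 : dist (f t) (f ((k:ℝ)*a)) ≤ ε/3 := by
      have h1 := hf t ht ((k:ℝ)*a) (hmem01 k hk.le)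
      have habs : |t - (k:ℝ)*a| ≤ a := by
        rw [abs_of_nonneg (by linarith)]; linarith
      have h2 : |t - (k:ℝ)*a| ^ α ≤ a ^ α :=
        Real.rpow_le_rpow (abs_nonneg _) habs hα0.le
      calc dist (f t) (f ((k:ℝ)*a)) ≤ M_n * |t - (k:ℝ)*a| ^ α := h1
        _ ≤ M_n * a ^ α := by gcongr
        _ ≤ ε/3 := haM
    have hextk : ext w k = nf (f ((k:ℝ)*a)) := by
      rw [hextle w k hk.le (by omega)]
    have hterm3 : dist (ext w k) (gfun w t) ≤ ε := by
      have := hdist w k hk ((k:ℝ)*a) ⟨le_rfl, by nlinarith⟩ t ⟨ht1, ht2⟩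
      rw [hgrid w k hk.le] at this
      rw [this]
      have habs : |(k:ℝ)*a - t| / a ≤ 1 := by
        rw [div_le_one ha0, abs_of_nonpos (by linarith)]; linarith
      calc (|(k:ℝ)*a - t|/a) * dist (ext w k) (ext w (k+1))
          ≤ 1 * ε := by
            apply mul_le_mul habs (hchain w hwchain k hk) dist_nonneg zero_le_one
        _ = ε := one_mul ε
    calc dist (f t) (gfun w t)
        ≤ dist (f t) (f ((k:ℝ)*a)) + dist (f ((k:ℝ)*a)) (ext w k)
          + dist (ext w k) (gfun w t) := dist_triangle4 _ _ _ _
      _ ≤ ε/3 + ε/3 + ε := by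
          have hterm2 : dist (f ((k:ℝ)*a)) (ext w k) ≤ ε/3 := by
            rw [hextk]; exact hnfd _
          gcongr
      _ = 5 * ε / 3 := by ring
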